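/- For any multiplicative character A on F_q and any x ∈ F_q, one has Ā(1-x) = δ(x) + (q/(q-1)) Σ_{χ} (Aχ choose χ) χ(x), where the sum is over all multiplicative characters χ of F_q, and δ(x) = 1 if x = 0 and δ(x) = 0 otherwise. -/

import Mathlib

open Finset

variable {F : Type} [Field F] [Fintype F] [DecidableEq F]

noncomputable instance : Fintype (MulChar F ℂ) := Fintype.ofFinite _

/-- Finite field binomial coefficient `(A choose B) := B(-1)/q · Σ_x A(x) B⁻¹(1-x)`. -/
noncomputable def binom (A B : MulChar F ℂ) : ℂ :=
  B (-1) / (Fintype.card F : ℂ) * ∑ x : F, A x * B⁻¹ (1 - x)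

instance : NeZero (Monoid.exponent Fˣ) := ⟨Monoid.exponent_ne_zero_of_finite⟩

lemma sum_chars (a : F) :
    ∑ χ : MulChar F ℂ, χ a = if a = 1 then ((Fintype.card F : ℂ) - 1) else 0 := by
  split_ifs with ha
  · subst ha
    simp only [map_one, Finset.sum_const, Finset.card_univ, nsmul_eq_mul, mul_one]
    have h1 : Fintype.card (MulChar F ℂ) = Nat.card Fˣ := by
      rw [← Nat.card_eq_fintype_card]
      exact MulChar.card_eq_card_units_of_hasEnoughRootsOfUnity F ℂ
    have h2 : (1 : ℕ) ≤ Fintype.card F := Fintype.card_pos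
    rw [h1, Nat.card_eq_fintype_card, Fintype.card_units]
    push_cast [h2]
    ring
  · obtain ⟨χ, hχ⟩ := MulChar.exists_apply_ne_one_of_hasEnoughRootsOfUnity F ℂ ha
    refine eq_zero_of_mul_eq_self_left hχ ?_
    simp only [Finset.mul_sum, ← MulChar.mul_apply]
    exact Fintype.sum_bijective _ (Group.mulLeft_bijective χ) _ _ fun χ' ↦ rfl

lemma key_sum (A : MulChar F ℂ) (x : F) :
    ∑ χ : MulChar F ℂ, binom (A * χ) χ * χ x =
      ((Fintype.card F : ℂ) - 1) / (Fintype.card F : ℂ) *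
        (if x = 0 then 0 else A⁻¹ (1 - x)) := by
  have hq : (Fintype.card F : ℂ) ≠ 0 := Nat.cast_ne_zero.mpr Fintype.card_ne_zero
  have step1 : ∑ χ : MulChar F ℂ, binom (A * χ) χ * χ x =
      (1 / (Fintype.card F : ℂ)) * ∑ t : F, A t *
        ∑ χ : MulChar F ℂ, χ (-(t * (x * (1 - t)⁻¹))) := by
    have h : ∀ χ : MulChar F ℂ, binom (A * χ) χ * χ x =
        ∑ t : F, (1 / (Fintype.card F : ℂ)) * (A t * χ (-(t * (x * (1 - t)⁻¹)))) := by
      intro χ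
      rw [binom, Finset.mul_sum, Finset.sum_mul]
      refine Finset.sum_congr rfl fun t _ ↦ ?_
      have harg : χ (-(t * (x * (1 - t)⁻¹))) = χ (-1) * (χ t * (χ x * χ (1 - t)⁻¹)) := by
        rw [← map_mul, ← map_mul, ← map_mul]
        congr 1
        ring
      rw [harg, MulChar.mul_apply, MulChar.inv_apply']
      ring
    rw [Finset.sum_congr rfl fun χ _ ↦ h χ, Finset.sum_comm]
    simp only [← Finset.mul_sum]
  rw [step1]
  simp only [sum_chars]
  by_cases hx0 : x = 0
  · subst hx0
    simp [zero_ne_one]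
  by_cases hx1 : x = 1
  · subst hx1
    have hcond : ∀ t : F, ¬(-(t * ((1 : F) * (1 - t)⁻¹)) = 1) := by
      intro t h
      by_cases ht : t = 1
      · simp [ht] at h
      · have h1t : (1 : F) - t ≠ 0 := sub_ne_zero.mpr fun hh ↦ ht hh.symm
        field_simp at h
        exact one_ne_zero (by linear_combination -h : (1:F) = 0)
    simp only [hcond, if_false, mul_zero, Finset.sum_const_zero]
    simp [MulChar.map_nonunit]
  · have h1x : (1 : F) - x ≠ 0 := sub_ne_zero.mpr fun hh ↦ hx1 hh.symm
    have hcond : ∀ t : F, (-(t * (x * (1 - t)⁻¹)) = 1) ↔ t = (1 - x)⁻¹ := by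
      intro t
      constructor
      · intro h
        by_cases ht : t = 1
        · simp [ht] at h
        · have h1t : (1 : F) - t ≠ 0 := sub_ne_zero.mpr fun hh ↦ ht hh.symm
          field_simp at h ⊢
          linear_combination h
      · intro h
        subst h
        have hne : (1 : F) - (1 - x)⁻¹ = -x * (1 - x)⁻¹ := by
          field_simp
          ring
        rw [hne]
        have hx0' : -x * (1 - x)⁻¹ ≠ 0 := by
          simp [hx0, inv_ne_zero h1x]
        field_simp
    simp only [hcond, mul_ite, mul_zero, Finset.sum_ite_eq', Finset.mem_univ, if_true]
    rw [if_neg hx0, ← MulChar.inv_apply' A (1 - x)]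
    ring

theorem inv_one_sub_eq_char_sum (A : MulChar F ℂ) (x : F) :
    A⁻¹ (1 - x) =
      (if x = 0 then (1 : ℂ) else 0) +
        (Fintype.card F : ℂ) / ((Fintype.card F : ℂ) - 1) *
          ∑ χ : MulChar F ℂ, binom (A * χ) χ * χ x := by
  have hq : (Fintype.card F : ℂ) ≠ 0 := Nat.cast_ne_zero.mpr Fintype.card_ne_zero
  have hq1 : (Fintype.card F : ℂ) - 1 ≠ 0 := by
    have h2 : 1 < Fintype.card F := Fintype.one_lt_card
    intro h
    rw [sub_eq_zero] at h
    have : Fintype.card F = 1 := by exact_mod_cast h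
    omega
  rw [key_sum]
  by_cases hx0 : x = 0
  · subst hx0
    simp
  · rw [if_neg hx0, if_neg hx0]
    field_simp
    ring
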